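/- Let λ ∈ (0,1), σ > 0, M > 0 and ε ∈ (0,1). Then there exists K > 0 such that for every k > K and every C ∈ (0, M], there is no x > 0 satisfying (σ/2)·C·x^λ ≥ (k/(4ε))·x + ε. Moreover one may take K = (C̃·M^{1/(1−λ)}/ε)^{(1−λ)/λ}, where C̃ = 2^{(2λ−2δ'−1)/(1−λ)}·σ^{1/(1−λ)} with δ' = 0, i.e. C̃ = 2^{(2λ−1)/(1−λ)}·σ^{1/(1−λ)}. -/

import Mathlib

/-- Let λ ∈ (0,1), σ > 0, M > 0 and ε ∈ (0,1). Then there exists K > 0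
such that for every k > K and every C ∈ (0, M], there is no x > 0 satisfying
(σ/2)·C·x^λ ≥ (k/(4ε))·x + ε. Moreover one may take
K = (C̃·M^{1/(1−λ)}/ε)^{(1−λ)/λ} with C̃ = 2^{(2λ−1)/(1−λ)}·σ^{1/(1−λ)}. -/
theorem fCIR_no_excursion_inequality_for_large_k (l σ M ε : ℝ)
    (hl0 : 0 < l) (hl1 : l < 1) (hσ : 0 < σ) (hM : 0 < M) (hε0 : 0 < ε) (hε1 : ε < 1)
    (Ctil K : ℝ)
    (hCtil : Ctil = (2 : ℝ) ^ ((2 * l - 1) / (1 - l)) * σ ^ (1 / (1 - l)))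
    (hK : K = (Ctil * M ^ (1 / (1 - l)) / ε) ^ ((1 - l) / l)) :
    0 < K ∧ ∀ k : ℝ, K < k → ∀ C : ℝ, 0 < C → C ≤ M →
      ¬ ∃ x : ℝ, 0 < x ∧ (k / (4 * ε)) * x + ε ≤ (σ / 2) * C * x ^ l := by
  have h1l : (0:ℝ) < 1 - l := by linarith
  have hCtil0 : 0 < Ctil := by
    rw [hCtil]; positivity
  have hK0 : 0 < K := by
    rw [hK]
    apply Real.rpow_pos_of_pos
    positivity
  refine ⟨hK0, ?_⟩
  intro k hk C hC hCM
  rintro ⟨x, hx, hineq⟩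
  have hk0 : 0 < k := hK0.trans hk
  set r : ℝ := l / (1 - l) with hr
  have hr0 : 0 < r := by positivity
  set A : ℝ := 2 * σ * C * ε / k with hA
  have hA0 : 0 < A := by positivity
  set u : ℝ := A ^ (1 / (1 - l)) with hu
  have hu0 : 0 < u := Real.rpow_pos_of_pos hA0 _
  -- u^(l-1) = k / (2σCε)
  have hul1 : u ^ (l - 1) = k / (2 * σ * C * ε) := by
    rw [hu, ← Real.rpow_mul hA0.le]
    have e : 1 / (1 - l) * (l - 1) = -1 := by field_simp; ring
    rw [e, Real.rpow_neg_one, hA]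
    rw [inv_div]
  have hcoef : σ / 2 * C * u ^ (l - 1) = k / (4 * ε) := by
    rw [hul1]
    field_simp
    ring
  -- u^l = A^r
  have hul : u ^ l = A ^ r := by
    rw [hu, ← Real.rpow_mul hA0.le]
    congr 1
    rw [hr]
    field_simp
  -- key pointwise bound
  have hkey : x ^ l ≤ u ^ l + u ^ (l - 1) * x := by
    rcases le_total x u with h | h
    · have h1 : x ^ l ≤ u ^ l := Real.rpow_le_rpow hx.le h hl0.le
      have h2 : 0 ≤ u ^ (l - 1) * x := by positivity
      linarith
    · have h1 : x ^ (l - 1) ≤ u ^ (l - 1) :=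
        Real.rpow_le_rpow_of_nonpos hu0 h (by linarith)
      have h2 : x ^ l = x ^ (l - 1) * x := by
        rw [← Real.rpow_add_one hx.ne' (l - 1)]
        ring_nf
      have h3 : x ^ (l - 1) * x ≤ u ^ (l - 1) * x :=
        mul_le_mul_of_nonneg_right h1 hx.le
      have h4 : 0 ≤ u ^ l := Real.rpow_nonneg hu0.le l
      linarith [h2 ▸ h3]
  -- K^r = Ctil * M^(1/(1-l)) / ε
  have hKr : K ^ r = Ctil * M ^ (1 / (1 - l)) / ε := by
    rw [hK, ← Real.rpow_mul (by positivity)]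
    have e : (1 - l) / l * r = 1 := by rw [hr]; field_simp
    rw [e, Real.rpow_one]
  have hkr : K ^ r < k ^ r := Real.rpow_lt_rpow hK0.le hk hr0
  have hεr : ε ^ r ≤ 1 := Real.rpow_le_one hε0.le hε1.le hr0.le
  have hCr : C ^ r ≤ M ^ r := Real.rpow_le_rpow hC.le hCM hr0.le
  have hAr : A ^ r = (2:ℝ) ^ r * σ ^ r * C ^ r * ε ^ r / k ^ r := by
    rw [hA, Real.div_rpow (by positivity) hk0.le,
      Real.mul_rpow (by positivity) hε0.le,
      Real.mul_rpow (by positivity) hC.le,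
      Real.mul_rpow (by norm_num) hσ.le]
  have hMexp : M ^ (1 / (1 - l)) = M ^ r * M := by
    rw [← Real.rpow_add_one hM.ne' r]
    congr 1
    rw [hr]; field_simp; ring
  have hCtil' : Ctil = (2:ℝ) ^ r / 2 * (σ ^ r * σ) := by
    rw [hCtil]
    have e1 : (2 * l - 1) / (1 - l) = r - 1 := by rw [hr]; field_simp; ring
    have e2 : 1 / (1 - l) = r + 1 := by rw [hr]; field_simp; ring
    rw [e1, e2, Real.rpow_sub (by norm_num), Real.rpow_one,
      Real.rpow_add hσ, Real.rpow_one]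
  -- main: (σ/2)·C·u^l < ε
  have hkrpos : 0 < k ^ r := Real.rpow_pos_of_pos hk0 r
  have hmain : σ / 2 * C * u ^ l < ε := by
    rw [hul, hAr]
    have e : σ / 2 * C * ((2:ℝ) ^ r * σ ^ r * C ^ r * ε ^ r / k ^ r)
        = σ / 2 * C * ((2:ℝ) ^ r * σ ^ r * C ^ r * ε ^ r) / k ^ r := by ring
    rw [e, div_lt_iff₀ hkrpos]
    have hεK : ε * K ^ r = Ctil * M ^ (1 / (1 - l)) := by
      rw [hKr]; field_simp
    have hεk : Ctil * M ^ (1 / (1 - l)) < ε * k ^ r := by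
      rw [← hεK]
      exact mul_lt_mul_of_pos_left hkr hε0
    have h3 : C * C ^ r * ε ^ r ≤ M * M ^ r := by
      have h5 : C * C ^ r * ε ^ r ≤ C * C ^ r * 1 :=
        mul_le_mul_of_nonneg_left hεr (by positivity)
      have h6 : C * C ^ r ≤ M * M ^ r :=
        mul_le_mul hCM hCr (by positivity) hM.le
      linarith
    have hL : σ / 2 * C * ((2:ℝ) ^ r * σ ^ r * C ^ r * ε ^ r)
        ≤ Ctil * M ^ (1 / (1 - l)) := by
      rw [hCtil', hMexp]
      calc σ / 2 * C * ((2:ℝ) ^ r * σ ^ r * C ^ r * ε ^ r)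
          = σ * σ ^ r * (2:ℝ) ^ r / 2 * (C * C ^ r * ε ^ r) := by ring
        _ ≤ σ * σ ^ r * (2:ℝ) ^ r / 2 * (M * M ^ r) :=
            mul_le_mul_of_nonneg_left h3 (by positivity)
        _ = (2:ℝ) ^ r / 2 * (σ ^ r * σ) * (M ^ r * M) := by ring
    linarith
  -- derive contradiction
  have hchain : k / (4 * ε) * x + ε ≤ σ / 2 * C * u ^ l + k / (4 * ε) * x := by
    calc k / (4 * ε) * x + ε ≤ σ / 2 * C * x ^ l := hineq
      _ ≤ σ / 2 * C * (u ^ l + u ^ (l - 1) * x) :=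
          mul_le_mul_of_nonneg_left hkey (by positivity)
      _ = σ / 2 * C * u ^ l + σ / 2 * C * u ^ (l - 1) * x := by ring
      _ = σ / 2 * C * u ^ l + k / (4 * ε) * x := by rw [hcoef]
  linarith
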